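/- If on a board of isolated stacks of heights one and two (groups of size two or four, no blocked cycle) a group g has a match whose removal creates a new blocked cycle, then after that removal exactly one tile of g remains on the ground (i.e., as the bottom or sole tile of a stack). -/

import Mathlib

/-- A board is a finite multiset of isolated stacks; each stack is a list of
tile groups, with the head of the list being the top tile of the stack. -/
abbrev Board (G : Type*) := Multiset (List G)

variable {G : Type*} [DecidableEq G]

/-- The number of tiles of group `g` remaining on the board. -/
def tileCount (B : Board G) (g : G) : ℕ := (B.map (fun s => s.count g)).sum

/-- The total number of tiles on the board. -/
def totalTiles (B : Board G) : ℕ := (B.map List.length).sum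

/-- The board obtained by removing the (playable) top tiles of stacks `s₁` and
`s₂`, the remaining stacks being `rest`; emptied stacks disappear. -/
def play (s₁ s₂ : List G) (rest : Board G) : Board G :=
  Multiset.filter (fun s => s ≠ []) (s₁.tail ::ₘ s₂.tail ::ₘ rest)

/-- A legal move: remove two playable (top) tiles of the same group. -/
def Move (B B' : Board G) : Prop :=
  ∃ (g : G) (s₁ s₂ : List G) (rest : Board G),
    B = s₁ ::ₘ s₂ ::ₘ rest ∧ s₁.head? = some g ∧ s₂.head? = some g ∧
    B' = play s₁ s₂ rest

/-- A board is solvable iff some sequence of legal moves empties it. -/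
def Solvable (B : Board G) : Prop := Relation.ReflTransGen Move B 0

/-- All stacks are nonempty and of height at most two. -/
def HeightsOK (B : Board G) : Prop := ∀ s ∈ B, s ≠ [] ∧ s.length ≤ 2

/-- A blocked cycle: distinct groups `p 0, …, p k`, each with exactly two
remaining tiles, such that for each `i` there is a height-two stack with a
`p (i+1)`-tile (cyclically) on top of a `p i`-tile. -/
def BlockedCycle (B : Board G) {k : ℕ} (p : Fin (k + 1) → G) : Prop :=
  Function.Injective p ∧ (∀ i, tileCount B (p i) = 2) ∧
    ∀ i, [p (i + 1), p i] ∈ B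

/-- The board contains some blocked cycle. -/
def HasBlockedCycle (B : Board G) : Prop :=
  ∃ (k : ℕ) (p : Fin (k + 1) → G), BlockedCycle B p

/-- The number of tiles of group `g` lying on the ground, i.e. at the bottom of
their stack. -/
def groundCount (B : Board G) (g : G) : ℕ :=
  (B.map (fun s => if s.getLast? = some g then 1 else 0)).sum

lemma tileCount_cons (s : List G) (M : Board G) (g : G) :
    tileCount (s ::ₘ M) g = s.count g + tileCount M g := by
  simp [tileCount]

lemma groundCount_cons (s : List G) (M : Board G) (g : G) :
    groundCount (s ::ₘ M) g
      = (if s.getLast? = some g then 1 else 0) + groundCount M g := by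
  simp [groundCount]

lemma groundCount_le_tileCount (M : Board G) (g : G) :
    groundCount M g ≤ tileCount M g := by
  induction M using Multiset.induction with
  | empty => simp [groundCount, tileCount]
  | cons a M ih =>
    rw [groundCount_cons, tileCount_cons]
    have h1 : (if a.getLast? = some g then 1 else 0) ≤ a.count g := by
      split_ifs with h
      · obtain ⟨hne, heq⟩ := List.mem_getLast?_eq_getLast h
        exact List.count_pos_iff.mpr (heq ▸ List.getLast_mem hne)
      · exact Nat.zero_le _
    omega

lemma tileCount_filter_ne_nil (M : Board G) (g : G) :
    tileCount (Multiset.filter (fun s => s ≠ []) M) g = tileCount M g := by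
  induction M using Multiset.induction with
  | empty => simp
  | cons a M ih =>
    by_cases h : a = []
    · subst h
      rw [Multiset.filter_cons_of_neg _ (by simp), tileCount_cons]
      simpa using ih
    · rw [Multiset.filter_cons_of_pos _ (by simpa using h), tileCount_cons,
        tileCount_cons, ih]

/-- if playing a match of group `g` on a cycle-free board (stacks
of heights one and two, groups of size two or four) creates a blocked cycle,
then after that removal exactly one tile of `g` remains on the ground. -/
theorem stmt18 (B : Board G) (hH : HeightsOK B)
    (hs : ∀ g : G, tileCount B g = 0 ∨ tileCount B g = 2 ∨ tileCount B g = 4)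
    (hnc : ¬ HasBlockedCycle B) (g : G) (s₁ s₂ : List G) (rest : Board G)
    (hB : B = s₁ ::ₘ s₂ ::ₘ rest)
    (h1 : s₁.head? = some g) (h2 : s₂.head? = some g)
    (hcyc : HasBlockedCycle (play s₁ s₂ rest)) :
    groundCount (play s₁ s₂ rest) g = 1 := by
  -- Split the two played stacks into head `g` and tails.
  obtain ⟨t₁, rfl⟩ : ∃ t, s₁ = g :: t := by
    cases s₁ with
    | nil => simp at h1
    | cons a t => exact ⟨t, by simpa using (by simpa using h1 : a = g) ▸ rfl⟩
  obtain ⟨t₂, rfl⟩ : ∃ t, s₂ = g :: t := by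
    cases s₂ with
    | nil => simp at h2
    | cons a t => exact ⟨t, by simpa using (by simpa using h2 : a = g) ▸ rfl⟩
  set B' := play (g :: t₁) (g :: t₂) rest with hB'
  -- tail lengths
  have ht₁ : t₁.length ≤ 1 := by
    have := (hH _ (by rw [hB]; exact Multiset.mem_cons_self _ _)).2
    simpa using this
  have ht₂ : t₂.length ≤ 1 := by
    have := (hH _ (by rw [hB]; exact Multiset.mem_cons_of_mem (Multiset.mem_cons_self _ _))).2
    simpa using this
  -- membership in B'
  have hmem : ∀ s : List G, s ∈ B' ↔ s ≠ [] ∧ (s = t₁ ∨ s = t₂ ∨ s ∈ rest) := by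
    intro s
    simp [hB', play, Multiset.mem_filter, Multiset.mem_cons, and_comm]
  have hstackrest : ∀ s : List G, s.length = 2 → s ∈ B' → s ∈ rest := by
    intro s hlen hsB'
    rcases (hmem s).mp hsB' with ⟨-, rfl | rfl | h⟩
    · omega
    · omega
    · exact h
  -- tile counts
  have htc : ∀ x, tileCount B' x = t₁.count x + t₂.count x + tileCount rest x := by
    intro x
    rw [hB']
    show tileCount (Multiset.filter (fun s => s ≠ []) (t₁ ::ₘ t₂ ::ₘ rest)) x = _
    rw [tileCount_filter_ne_nil, tileCount_cons, tileCount_cons]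
    omega
  have htcB : ∀ x, tileCount B x
      = (if g = x then 2 else 0) + (t₁.count x + t₂.count x + tileCount rest x) := by
    intro x
    rw [hB, tileCount_cons, tileCount_cons]
    simp [List.count_cons]
    split_ifs <;> omega
  obtain ⟨k, p, hinj, hct, hst⟩ := hcyc
  have hstrest : ∀ i, [p (i + 1), p i] ∈ rest := fun i =>
    hstackrest _ rfl (hst i)
  -- g must be one of the cycle groups
  have hg : ∃ i, p i = g := by
    by_contra hcon
    push_neg at hcon
    refine hnc ⟨k, p, hinj, fun i => ?_, fun i => ?_⟩
    · have h1 := hct i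
      rw [htc] at h1
      rw [htcB]
      have := hcon i
      simp [Ne.symm this]
      omega
    · rw [hB]
      exact Multiset.mem_cons_of_mem (Multiset.mem_cons_of_mem (hstrest i))
  obtain ⟨i₀, hi₀⟩ := hg
  have hct' : tileCount B' g = 2 := by rw [← hi₀]; exact hct i₀
  rcases Nat.eq_zero_or_pos k with hk | hk
  · -- k = 0 : single self-cycle, stack [g, g]
    subst hk
    have hA : [g, g] ∈ B' := by
      have := hst i₀
      have e1 : i₀ + 1 = i₀ := Subsingleton.elim (α := Fin 1) _ _
      rwa [e1, hi₀] at this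
    have hdec := Multiset.cons_erase hA
    have hz : tileCount (B'.erase [g, g]) g = 0 := by
      have h2 := hct'
      rw [← hdec, tileCount_cons] at h2
      simp [List.count_cons] at h2
      omega
    have hgz : groundCount (B'.erase [g, g]) g = 0 :=
      Nat.le_zero.mp (hz ▸ groundCount_le_tileCount _ _)
    show groundCount B' g = 1
    rw [← hdec, groundCount_cons, hgz]
    simp
  · -- k ≥ 1 : the two stacks [p (i₀+1), g] and [g, p (i₀-1)] are distinct
    have h10 : (1 : Fin (k + 1)) ≠ 0 := by
      have : NeZero (k + 1) := ⟨by omega⟩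
      rw [Ne, Fin.one_eq_zero_iff]
      omega
    have hA : [p (i₀ + 1), g] ∈ B' := hi₀ ▸ hst i₀
    have hC : [g, p (i₀ - 1)] ∈ B' := by
      have := hst (i₀ - 1)
      rwa [sub_add_cancel, hi₀] at this
    have hne1 : p (i₀ + 1) ≠ g := by
      intro h
      have he : i₀ + 1 = i₀ := hinj (h.trans hi₀.symm)
      exact h10 (add_eq_left.mp he)
    have hne2 : p (i₀ - 1) ≠ g := by
      intro h
      have he : i₀ - 1 = i₀ := hinj (h.trans hi₀.symm)
      exact h10 (sub_eq_self.mp he)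
    have hAC : ([g, p (i₀ - 1)] : List G) ≠ [p (i₀ + 1), g] := by
      intro h
      simp at h
      exact hne1 h.1.symm
    have hC' : [g, p (i₀ - 1)] ∈ B'.erase [p (i₀ + 1), g] :=
      (Multiset.mem_erase_of_ne hAC).mpr hC
    have hd1 := Multiset.cons_erase hA
    have hd2 := Multiset.cons_erase hC'
    have hz : tileCount ((B'.erase [p (i₀ + 1), g]).erase [g, p (i₀ - 1)]) g = 0 := by
      have h2 := hct'
      rw [← hd1, ← hd2, tileCount_cons, tileCount_cons] at h2
      simp [List.count_cons, hne1, hne2] at h2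
      omega
    have hgz : groundCount ((B'.erase [p (i₀ + 1), g]).erase [g, p (i₀ - 1)]) g = 0 :=
      Nat.le_zero.mp (by
        have := groundCount_le_tileCount ((B'.erase [p (i₀ + 1), g]).erase [g, p (i₀ - 1)]) g
        omega)
    show groundCount B' g = 1
    rw [← hd1, ← hd2, groundCount_cons, groundCount_cons, hgz]
    simp [hne2]
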